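/- arXiv:2309.14252 — 2 statements merged into one kernel-verified Lean document; each statement's English description precedes it below -/
import Mathlib

section
/- The ℓ_1-direct sum ⊕_1 X_n of a sequence of nontrivial normed spaces has no nonzero left-symmetric point; moreover x = (x_n) is a right-symmetric point of ⊕_1 X_n if and only if there is n_0 with x_n = 0 for all n ≠ n_0 and x_{n_0} a right-symmetric point of X_{n_0}. -/
set_option maxHeartbeats 1000000

open scoped ENNReal

/-- Birkhoff-James orthogonality: `u ⊥_B v` iff `‖u + c • v‖ ≥ ‖u‖` for every scalar. -/
def BJOrth {X : Type*} [NormedAddCommGroup X] [NormedSpace ℝ X] (u v : X) : Prop :=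
  ∀ c : ℝ, ‖u‖ ≤ ‖u + c • v‖

/-- A left-symmetric point: `x ⊥_B y` implies `y ⊥_B x` for all `y`. -/
def LeftSymPt {X : Type*} [NormedAddCommGroup X] [NormedSpace ℝ X] (x : X) : Prop :=
  ∀ y : X, BJOrth x y → BJOrth y x

/-- A right-symmetric point: `y ⊥_B x` implies `x ⊥_B y` for all `y`. -/
def RightSymPt {X : Type*} [NormedAddCommGroup X] [NormedSpace ℝ X] (x : X) : Prop :=
  ∀ y : X, BJOrth y x → BJOrth x y

section aux

set_option linter.unusedSectionVars false

variable {E : ℕ → Type*} [∀ n, NormedAddCommGroup (E n)] [∀ n, NormedSpace ℝ (E n)]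

lemma lp1_add_apply (f g : lp E 1) (n : ℕ) : (f + g) n = f n + g n := rfl

lemma lp1_smul_apply (a : ℝ) (f : lp E 1) (n : ℕ) : (a • f) n = a • f n := rfl

lemma key (f : lp E 1) : HasSum (fun n => ‖f n‖) ‖f‖ := by
  simpa using lp.hasSum_norm (p := 1) (by norm_num) f

lemma norm_eq {f : lp E 1} {s : ℝ} (h : HasSum (fun n => ‖f n‖) s) : ‖f‖ = s :=
  (key f).unique h

lemma hsplit (f : lp E 1) (q : ℕ) :
    HasSum (fun n => if n = q then (0:ℝ) else ‖f n‖) (‖f‖ - ‖f q‖) := by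
  have h := (key f).sub (hasSum_ite_eq q ‖f q‖)
  have e : (fun n => if n = q then (0:ℝ) else ‖f n‖)
      = fun n => ‖f n‖ - (if n = q then ‖f q‖ else 0) := by
    funext n
    by_cases hn : n = q
    · subst hn; simp
    · simp [hn]
  rw [e]; exact h

/-- Case A of part 1: `x ≠ 0` with some zero coordinate is not left-symmetric. -/
lemma caseA (x : lp E 1) (hx : x ≠ 0) (r : ℕ) (hr : x r = 0) [Nontrivial (E r)] :
    ¬ LeftSymPt x := by
  intro L
  set S := ‖x‖ with hS
  have hSpos : 0 < S := norm_pos_iff.mpr hx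
  obtain ⟨e, he⟩ := exists_ne (0 : E r)
  have hepos : 0 < ‖e‖ := norm_pos_iff.mpr he
  set w : E r := (S / ‖e‖) • e with hw
  have hwn : ‖w‖ = S := by
    rw [hw, norm_smul, Real.norm_eq_abs, abs_of_pos (by positivity), div_mul_cancel₀]
    exact norm_ne_zero_iff.mpr he
  set y : lp E 1 := x + lp.single 1 r w with hy
  have hyr : y r = w := by
    simp [hy, lp.coeFn_add, hr, lp.single_apply_self]
  have hyn : ∀ n, n ≠ r → y n = x n := by
    intro n hn
    simp [hy, lp.coeFn_add, lp.single_apply_ne 1 r w hn, Pi.add_apply, Pi.single_apply, hn]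
  -- x ⊥ y
  have hxy : BJOrth x y := by
    intro c
    have hsum : HasSum (fun n => ‖(x + c • y) n‖) (|1 + c| * S + |c| * S) := by
      have h1 := (key x).mul_left |1 + c|
      have h2 := hasSum_ite_eq r (|c| * S)
      have := h1.add h2
      have e1 : (fun n => ‖(x + c • y) n‖)
          = fun n => |1 + c| * ‖x n‖ + (if n = r then |c| * S else 0) := by
        funext n
        by_cases hn : n = r
        · subst hn
          simp only [lp.coeFn_add, lp.coeFn_smul, Pi.add_apply, Pi.smul_apply, hr, hyr]
          simp [norm_smul, hwn, Real.norm_eq_abs]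
        · have : (x + c • y) n = (1 + c) • x n := by
            simp only [lp.coeFn_add, lp.coeFn_smul, Pi.add_apply, Pi.smul_apply, hyn n hn]
            rw [add_smul, one_smul]
          rw [this, norm_smul, Real.norm_eq_abs]
          simp [hn]
      rw [e1]; exact this
    have hnorm := norm_eq hsum
    rw [hnorm]
    have habs : 1 ≤ |1 + c| + |c| := by
      have h := abs_add_le (1 + c) (-c)
      rw [abs_neg] at h
      have h3 : (1 + c) + -c = 1 := by ring
      rw [h3, abs_one] at h
      exact h
    nlinarith
  have hyx := L y hxy (-(1/2))
  have hynorm : ‖y‖ = S + S := by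
    refine norm_eq ?_
    have := (key x).add (hasSum_ite_eq r S)
    have e1 : (fun n => ‖y n‖) = fun n => ‖x n‖ + (if n = r then S else 0) := by
      funext n
      by_cases hn : n = r
      · subst hn; simp [hyr, hwn, hr]
      · simp [hyn n hn, hn]
    rw [e1]; exact this
  have hynorm2 : ‖y + (-(1/2) : ℝ) • x‖ = (1/2) * S + S := by
    refine norm_eq ?_
    have := ((key x).mul_left (1/2)).add (hasSum_ite_eq r S)
    have e1 : (fun n => ‖(y + (-(1/2) : ℝ) • x) n‖)
        = fun n => (1/2) * ‖x n‖ + (if n = r then S else 0) := by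
      funext n
      by_cases hn : n = r
      · subst hn
        simp only [lp.coeFn_add, lp.coeFn_smul, Pi.add_apply, Pi.smul_apply, hyr, hr]
        simp [hwn]
      · have : (y + (-(1/2) : ℝ) • x) n = (-(1/2) + 1 : ℝ) • x n := by
          simp only [lp.coeFn_add, lp.coeFn_smul, Pi.add_apply, Pi.smul_apply, hyn n hn]
          rw [add_smul, one_smul, add_comm]
        rw [this, norm_smul, Real.norm_eq_abs]
        have : |(-(1/2) + 1 : ℝ)| = 1/2 := by norm_num
        rw [this]
        simp [hn]
    rw [e1]; exact this
  rw [hynorm, hynorm2] at hyx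
  linarith

/-- Case B of part 1. -/
lemma caseB (x : lp E 1) (P : ℕ → Bool) (α β : ℝ) (hα : 0 < α) (hβ : 0 < β)
    (hne : α ≠ β)
    (hA : HasSum (fun n => if P n then ‖x n‖ else 0) α)
    (hB : HasSum (fun n => if P n then 0 else ‖x n‖) β) : ¬ LeftSymPt x := by
  intro L
  set r : ℝ := α / β with hrdef
  have hr : 0 < r := div_pos hα hβ
  have hrβ : r * β = α := div_mul_cancel₀ α (ne_of_gt hβ)
  set yr : ∀ n, E n := fun n => if P n then x n else (-r) • x n with hyr
  have hysum : HasSum (fun n => ‖yr n‖) (α + r * β) := by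
    have := hA.add (hB.mul_left r)
    have e1 : (fun n => ‖yr n‖)
        = fun n => (if P n then ‖x n‖ else 0) + r * (if P n then 0 else ‖x n‖) := by
      funext n
      cases hP : P n <;> simp [hyr, hP, norm_smul, Real.norm_eq_abs, abs_of_pos hr]
    rw [e1]; exact this
  have hmem : Memℓp yr 1 := memℓp_gen (by simpa using hysum.summable)
  set y : lp E 1 := ⟨yr, hmem⟩ with hy
  have hyapp : ∀ n, y n = yr n := fun n => rfl
  have hysum' : HasSum (fun n => ‖y n‖) (α + r * β) := hysum
  have hxnorm : ‖x‖ = α + β := by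
    refine norm_eq ?_
    have := hA.add hB
    have e1 : (fun n => ‖x n‖)
        = fun n => (if P n then ‖x n‖ else 0) + (if P n then 0 else ‖x n‖) := by
      funext n; cases hP : P n <;> simp [hP]
    rw [e1]; exact this
  have hxy : BJOrth x y := by
    intro c
    have hsum : HasSum (fun n => ‖(x + c • y) n‖)
        (|1 + c| * α + |1 + c * (-r)| * β) := by
      have := (hA.mul_left |1 + c|).add (hB.mul_left |1 + c * (-r)|)
      have e1 : (fun n => ‖(x + c • y) n‖)
          = fun n => |1 + c| * (if P n then ‖x n‖ else 0)
            + |1 + c * (-r)| * (if P n then 0 else ‖x n‖) := by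
        funext n
        have happ : (x + c • y) n = x n + c • yr n := by
          simp [lp.coeFn_add, lp.coeFn_smul, hyapp, lp1_add_apply, lp1_smul_apply, Pi.add_apply, Pi.smul_apply]
        cases hP : P n
        · have : x n + c • yr n = (1 + c * (-r)) • x n := by
            simp only [hyr, hP, Bool.false_eq_true, if_false, smul_smul]
            rw [add_smul, one_smul]
          rw [happ, this, norm_smul, Real.norm_eq_abs]
          simp [hP]
        · have : x n + c • yr n = (1 + c) • x n := by
            simp only [hyr, hP, if_true]
            rw [add_smul, one_smul]
          rw [happ, this, norm_smul, Real.norm_eq_abs]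
          simp [hP]
      rw [e1]; exact this
    rw [norm_eq hsum, hxnorm]
    have e2 : (1 + c * (-r)) * β = β - c * α := by
      rw [← hrβ]; ring
    have h1 := mul_le_mul_of_nonneg_right (le_abs_self (1 + c)) hα.le
    have h2 := mul_le_mul_of_nonneg_right (le_abs_self (1 + c * (-r))) hβ.le
    nlinarith
  have hyx := L y hxy
  have hynorm : ‖y‖ = 2 * α := by
    rw [norm_eq hysum', hrβ]; ring
  -- pick the perturbation
  set ε : ℝ := min 1 r / 2 with hε
  have hεpos : 0 < ε := by positivity
  have hε1 : ε < 1 := by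
    have : min 1 r ≤ 1 := min_le_left _ _
    simp only [hε]; linarith
  have hεr : ε < r := by
    have : min 1 r ≤ r := min_le_right _ _
    simp only [hε]; linarith
  have hval : ∀ c : ℝ, |c| ≤ ε →
      ‖y + c • x‖ = 2 * α + c * (α - β) := by
    intro c hc
    have hc1 : -1 < c := by
      have := neg_abs_le c; linarith
    have hcr : c < r := by
      have := le_abs_self c; linarith
    have hsum : HasSum (fun n => ‖(y + c • x) n‖)
        ((1 + c) * α + (r - c) * β) := by
      have := (hA.mul_left (1 + c)).add (hB.mul_left (r - c))
      have e1 : (fun n => ‖(y + c • x) n‖)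
          = fun n => (1 + c) * (if P n then ‖x n‖ else 0)
            + (r - c) * (if P n then 0 else ‖x n‖) := by
        funext n
        have happ : (y + c • x) n = yr n + c • x n := by
          simp [lp.coeFn_add, lp.coeFn_smul, hyapp, lp1_add_apply, lp1_smul_apply, Pi.add_apply, Pi.smul_apply]
        cases hP : P n
        · have : yr n + c • x n = (c - r) • x n := by
            simp only [hyr, hP, Bool.false_eq_true, if_false]
            rw [sub_smul, neg_smul, add_comm, sub_eq_add_neg]
          rw [happ, this, norm_smul, Real.norm_eq_abs, abs_of_neg (by linarith)]
          simp [hP]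
        · have : yr n + c • x n = (1 + c) • x n := by
            simp only [hyr, hP, if_true]
            rw [add_smul, one_smul]
          rw [happ, this, norm_smul, Real.norm_eq_abs, abs_of_pos (by linarith)]
          simp [hP]
      rw [e1]; exact this
    rw [norm_eq hsum]
    have e2 : (r - c) * β = α - c * β := by rw [← hrβ]; ring
    nlinarith
  rcases lt_or_gt_of_ne hne with h | h
  · -- α < β : take c = ε
    have := hyx ε
    rw [hynorm, hval ε (by rw [abs_of_pos hεpos])] at this
    nlinarith
  · -- α > β : take c = -ε
    have := hyx (-ε)
    rw [hynorm, hval (-ε) (by rw [abs_neg, abs_of_pos hεpos])] at this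
    nlinarith

end aux

section aux2

set_option linter.unusedSectionVars false

variable {E : ℕ → Type*} [∀ n, NormedAddCommGroup (E n)] [∀ n, NormedSpace ℝ (E n)]

lemma no_two (x : lp E 1) (hrs : RightSymPt x) (p q : ℕ) (hpq : p ≠ q)
    (hq : x q ≠ 0) (hle : ‖x q‖ ≤ ‖x p‖) : False := by
  have hb : 0 < ‖x q‖ := norm_pos_iff.mpr hq
  have h2b : ‖x p‖ + ‖x q‖ ≤ ‖x‖ := by
    have := sum_le_hasSum ({p, q} : Finset ℕ) (fun i _ => norm_nonneg _) (key x)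
    rwa [Finset.sum_pair hpq] at this
  set y : lp E 1 := lp.single 1 q (x q) with hy
  have hynorm : ‖y‖ = ‖x q‖ := by
    refine norm_eq ?_
    have := hasSum_ite_eq q ‖x q‖
    have e1 : (fun n => ‖y n‖) = fun n => if n = q then ‖x q‖ else 0 := by
      funext n
      by_cases hn : n = q
      · subst hn; simp [hy, lp.single_apply_self]
      · simp [hy, lp.single_apply_ne 1 q _ hn, hn]
    rw [e1]; exact this
  have hyx : BJOrth y x := by
    intro c
    have hsum : HasSum (fun n => ‖(y + c • x) n‖)
        (|c| * (‖x‖ - ‖x q‖) + |1 + c| * ‖x q‖) := by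
      have := ((hsplit x q).mul_left |c|).add (hasSum_ite_eq q (|1 + c| * ‖x q‖))
      have e1 : (fun n => ‖(y + c • x) n‖)
          = fun n => |c| * (if n = q then 0 else ‖x n‖)
            + (if n = q then |1 + c| * ‖x q‖ else 0) := by
        funext n
        by_cases hn : n = q
        · subst hn
          have : (y + c • x) n = (1 + c) • x n := by
            simp only [lp.coeFn_add, lp.coeFn_smul, Pi.add_apply, Pi.smul_apply,
              hy, lp.single_apply_self]
            rw [add_smul, one_smul]
          rw [this, norm_smul, Real.norm_eq_abs]
          simp
        · have : (y + c • x) n = c • x n := by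
            simp [hy, lp.coeFn_add, lp.coeFn_smul, lp.single_apply_ne 1 q _ hn, lp1_add_apply, lp1_smul_apply, Pi.add_apply, Pi.smul_apply, Pi.single_apply, hn]
          rw [this, norm_smul, Real.norm_eq_abs]
          simp [hn]
      rw [e1]; exact this
    rw [norm_eq hsum, hynorm]
    have habs : 1 ≤ |1 + c| + |c| := by
      have h := abs_add_le (1 + c) (-c)
      rw [abs_neg] at h
      have h3 : (1 + c) + -c = 1 := by ring
      rw [h3, abs_one] at h
      exact h
    have hS2b : ‖x q‖ ≤ ‖x‖ - ‖x q‖ := by linarith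
    nlinarith [abs_nonneg c, abs_nonneg (1 + c)]
  have hxy := hrs y hyx (-1)
  have hval : ‖x + (-1 : ℝ) • y‖ = ‖x‖ - ‖x q‖ := by
    refine norm_eq ?_
    have := hsplit x q
    have e1 : (fun n => ‖(x + (-1 : ℝ) • y) n‖)
        = fun n => if n = q then (0:ℝ) else ‖x n‖ := by
      funext n
      by_cases hn : n = q
      · subst hn
        have : (x + (-1 : ℝ) • y) n = 0 := by
          simp [hy, lp.coeFn_add, lp.coeFn_smul, lp.single_apply_self]
        rw [this]; simp
      · have : (x + (-1 : ℝ) • y) n = x n := by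
          simp [hy, lp.coeFn_add, lp.coeFn_smul, lp.single_apply_ne 1 q _ hn, hn]
        rw [this]; simp [hn]
    rw [e1]; exact this
  rw [hval] at hxy
  linarith

end aux2

/-- The ℓ_1-direct sum of nontrivial normed spaces has no nonzero left-symmetric point,
and `x = (x_n)` is right-symmetric iff `x` is supported on a single coordinate `n₀` with
`x_{n₀}` a right-symmetric point of `E_{n₀}`. -/
theorem stmt18 (E : ℕ → Type*) [∀ n, NormedAddCommGroup (E n)]
    [∀ n, NormedSpace ℝ (E n)] [∀ n, Nontrivial (E n)] :
    (∀ x : lp E 1, x ≠ 0 → ¬ LeftSymPt x) ∧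
    (∀ x : lp E 1, RightSymPt x ↔
      ∃ n₀, (∀ n, n ≠ n₀ → x n = 0) ∧ RightSymPt (x n₀)) := by
  constructor
  · -- Part 1
    intro x hx L
    by_cases hz : ∀ n, x n ≠ 0
    · -- all coordinates nonzero
      have h0p : 0 < ‖x 0‖ := norm_pos_iff.mpr (hz 0)
      have h1p : 0 < ‖x 1‖ := norm_pos_iff.mpr (hz 1)
      have h2p : 0 < ‖x 2‖ := norm_pos_iff.mpr (hz 2)
      by_cases h0 : ‖x 0‖ = ‖x‖ - ‖x 0‖
      · -- balanced: split {0, 1} vs the rest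
        set P : ℕ → Bool := fun n => n == 0 || n == 1 with hP
        have hA : HasSum (fun n => if P n then ‖x n‖ else 0) (‖x 0‖ + ‖x 1‖) := by
          have := (hasSum_ite_eq (0:ℕ) ‖x 0‖).add (hasSum_ite_eq (1:ℕ) ‖x 1‖)
          have e1 : (fun n => if P n then ‖x n‖ else 0)
              = fun n => (if n = 0 then ‖x 0‖ else 0) + (if n = 1 then ‖x 1‖ else 0) := by
            funext n
            rcases n with _ | _ | n <;> simp [hP]
          rw [e1]; exact this
        have hB : HasSum (fun n => if P n then 0 else ‖x n‖) (‖x‖ - (‖x 0‖ + ‖x 1‖)) := by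
          have := (key x).sub hA
          have e1 : (fun n => if P n then 0 else ‖x n‖)
              = fun n => ‖x n‖ - (if P n then ‖x n‖ else 0) := by
            funext n; cases hPn : P n <;> simp [hPn]
          rw [e1]; exact this
        have h12 : ‖x 1‖ + ‖x 2‖ ≤ ‖x‖ - ‖x 0‖ := by
          have := sum_le_hasSum ({1, 2} : Finset ℕ)
            (fun i _ => by by_cases hi : i = 0 <;> simp [hi]) (hsplit x 0)
          rwa [Finset.sum_pair (by norm_num : (1:ℕ) ≠ 2), if_neg (by norm_num : (1:ℕ) ≠ 0),
            if_neg (by norm_num : (2:ℕ) ≠ 0)] at this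
        exact caseB x P (‖x 0‖ + ‖x 1‖) (‖x‖ - (‖x 0‖ + ‖x 1‖))
          (by linarith) (by linarith) (by intro h; nlinarith) hA hB L
      · -- unbalanced: split {0} vs the rest
        have hA : HasSum (fun n => if (n == 0 : Bool) then ‖x n‖ else 0) ‖x 0‖ := by
          have := hasSum_ite_eq (0:ℕ) ‖x 0‖
          have e1 : (fun n => if (n == 0 : Bool) then ‖x n‖ else 0)
              = fun n => if n = 0 then ‖x 0‖ else 0 := by
            funext n
            by_cases hn : n = 0
            · subst hn; simp
            · simp [hn]
          rw [e1]; exact this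
        have hB : HasSum (fun n => if (n == 0 : Bool) then 0 else ‖x n‖) (‖x‖ - ‖x 0‖) := by
          have := hsplit x 0
          have e1 : (fun n => if (n == 0 : Bool) then 0 else ‖x n‖)
              = fun n => if n = 0 then (0:ℝ) else ‖x n‖ := by
            funext n; by_cases hn : n = 0 <;> simp [hn]
          rw [e1]; exact this
        have hβ : ‖x 1‖ ≤ ‖x‖ - ‖x 0‖ :=
          le_hasSum hB 1 (fun j _ => by by_cases hj : (j == 0 : Bool) <;> simp [hj])
        exact caseB x (fun n => n == 0) ‖x 0‖ (‖x‖ - ‖x 0‖) h0p (by linarith) h0 hA hB L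
    · push_neg at hz
      obtain ⟨r, hr⟩ := hz
      exact caseA x hx r hr L
  · -- Part 2
    intro x
    constructor
    · intro hrs
      by_cases hx0 : x = 0
      · refine ⟨0, fun n _ => by rw [hx0]; simp, ?_⟩
        intro v _ c
        have h : x 0 = 0 := by rw [hx0]; simp
        rw [h]
        simp
      · obtain ⟨p, hp⟩ : ∃ p, x p ≠ 0 := by
          by_contra h
          push_neg at h
          exact hx0 (by ext n; simp [h n])
        have hsupp : ∀ n, n ≠ p → x n = 0 := by
          intro q hq
          by_contra hqne
          rcases le_total ‖x q‖ ‖x p‖ with h | h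
          · exact no_two x hrs p q hq.symm hqne h
          · exact no_two x hrs q p hq hp h
        refine ⟨p, hsupp, ?_⟩
        intro v hv c
        set y : lp E 1 := lp.single 1 p v with hy
        have hyx : BJOrth y x := by
          intro d
          have hsum : HasSum (fun n => ‖(y + d • x) n‖) ‖v + d • x p‖ := by
            have := hasSum_ite_eq p ‖v + d • x p‖
            have e1 : (fun n => ‖(y + d • x) n‖)
                = fun n => if n = p then ‖v + d • x p‖ else 0 := by
              funext n
              by_cases hn : n = p
              · subst hn
                simp [hy, lp.coeFn_add, lp.coeFn_smul, lp.single_apply_self, lp1_add_apply, lp1_smul_apply, Pi.add_apply, Pi.smul_apply, Pi.single_apply]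
              · have : (y + d • x) n = 0 := by
                  simp [hy, lp.coeFn_add, lp.coeFn_smul, lp.single_apply_ne 1 p _ hn, lp1_add_apply, lp1_smul_apply, Pi.add_apply, Pi.smul_apply, Pi.single_apply, hn,
                    hsupp n hn]
                rw [this]; simp [hn]
            rw [e1]; exact this
          have hynorm : ‖y‖ = ‖v‖ := by
            refine norm_eq ?_
            have := hasSum_ite_eq p ‖v‖
            have e1 : (fun n => ‖y n‖) = fun n => if n = p then ‖v‖ else 0 := by
              funext n
              by_cases hn : n = p
              · subst hn; simp [hy, lp.single_apply_self]
              · simp [hy, lp.single_apply_ne 1 p _ hn, hn]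
            rw [e1]; exact this
          rw [norm_eq hsum, hynorm]
          exact hv d
        have hxy := hrs y hyx c
        have h1 : ‖x‖ = ‖x p‖ := by
          refine norm_eq ?_
          have := hasSum_ite_eq p ‖x p‖
          have e1 : (fun n => ‖x n‖) = fun n => if n = p then ‖x p‖ else 0 := by
            funext n
            by_cases hn : n = p
            · subst hn; simp
            · simp [hsupp n hn, hn]
          rw [e1]; exact this
        have h2 : ‖x + c • y‖ = ‖x p + c • v‖ := by
          refine norm_eq ?_
          have := hasSum_ite_eq p ‖x p + c • v‖
          have e1 : (fun n => ‖(x + c • y) n‖)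
              = fun n => if n = p then ‖x p + c • v‖ else 0 := by
            funext n
            by_cases hn : n = p
            · subst hn
              simp [hy, lp.coeFn_add, lp.coeFn_smul, lp.single_apply_self, lp1_add_apply, lp1_smul_apply, Pi.add_apply, Pi.smul_apply, Pi.single_apply]
            · have : (x + c • y) n = 0 := by
                simp [hy, lp.coeFn_add, lp.coeFn_smul, lp.single_apply_ne 1 p _ hn, lp1_add_apply, lp1_smul_apply, Pi.add_apply, Pi.smul_apply, Pi.single_apply, hn,
                  hsupp n hn]
              rw [this]; simp [hn]
          rw [e1]; exact this
        rw [h1, h2] at hxy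
        exact hxy
    · rintro ⟨n₀, hsupp, hrs₀⟩
      intro y hyx c
      have hxnorm : ‖x‖ = ‖x n₀‖ := by
        refine norm_eq ?_
        have := hasSum_ite_eq n₀ ‖x n₀‖
        have e1 : (fun n => ‖x n‖) = fun n => if n = n₀ then ‖x n₀‖ else 0 := by
          funext n
          by_cases hn : n = n₀
          · subst hn; simp
          · simp [hsupp n hn, hn]
        rw [e1]; exact this
      have hycoord : BJOrth (y n₀) (x n₀) := by
        intro d
        have h := hyx d
        have hsum : HasSum (fun n => ‖(y + d • x) n‖)
            ((‖y‖ - ‖y n₀‖) + ‖y n₀ + d • x n₀‖) := by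
          have := (hsplit y n₀).add (hasSum_ite_eq n₀ ‖y n₀ + d • x n₀‖)
          have e1 : (fun n => ‖(y + d • x) n‖)
              = fun n => (if n = n₀ then 0 else ‖y n‖)
                + (if n = n₀ then ‖y n₀ + d • x n₀‖ else 0) := by
            funext n
            by_cases hn : n = n₀
            · subst hn
              simp [lp.coeFn_add, lp.coeFn_smul, lp1_add_apply, lp1_smul_apply, Pi.add_apply, Pi.smul_apply]
            · have : (y + d • x) n = y n := by
                simp [lp.coeFn_add, lp.coeFn_smul, hsupp n hn, lp1_add_apply, lp1_smul_apply, Pi.add_apply, Pi.smul_apply]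
              rw [this]; simp [hn]
          rw [e1]; exact this
        rw [norm_eq hsum] at h
        linarith
      have hx0y0 := hrs₀ (y n₀) hycoord c
      have hsum : HasSum (fun n => ‖(x + c • y) n‖)
          (|c| * (‖y‖ - ‖y n₀‖) + ‖x n₀ + c • y n₀‖) := by
        have := ((hsplit y n₀).mul_left |c|).add (hasSum_ite_eq n₀ ‖x n₀ + c • y n₀‖)
        have e1 : (fun n => ‖(x + c • y) n‖)
            = fun n => |c| * (if n = n₀ then 0 else ‖y n‖)
              + (if n = n₀ then ‖x n₀ + c • y n₀‖ else 0) := by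
          funext n
          by_cases hn : n = n₀
          · subst hn
            simp [lp.coeFn_add, lp.coeFn_smul, lp1_add_apply, lp1_smul_apply, Pi.add_apply, Pi.smul_apply]
          · have : (x + c • y) n = c • y n := by
              simp [lp.coeFn_add, lp.coeFn_smul, hsupp n hn, lp1_add_apply, lp1_smul_apply, Pi.add_apply, Pi.smul_apply]
            rw [this, norm_smul, Real.norm_eq_abs]
            simp [hn]
        rw [e1]; exact this
      rw [norm_eq hsum, hxnorm]
      have hyy : ‖y n₀‖ ≤ ‖y‖ := lp.norm_apply_le_norm (by norm_num) y n₀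
      nlinarith [abs_nonneg c, mul_nonneg (abs_nonneg c) (by linarith : (0:ℝ) ≤ ‖y‖ - ‖y n₀‖)]
end

section
/- The c_0-direct sum ⊕_0 X_n of a sequence of nontrivial normed spaces has no nonzero right-symmetric point; moreover a nonzero x = (x_n) ∈ ⊕_0 X_n is left-symmetric if and only if there exists n_0 such that x_n = 0 for all n ≠ n_0 and x_{n_0} is a left-symmetric point of X_{n_0}. -/
open scoped ENNReal
open Filter

/-- The c₀-direct sum of a sequence of normed spaces: the subspace of the ℓ_∞-direct sum
consisting of those sequences whose coordinate norms tend to zero, with the sup norm. -/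
noncomputable def c0Sum (E : ℕ → Type*) [∀ n, NormedAddCommGroup (E n)]
    [∀ n, NormedSpace ℝ (E n)] : Submodule ℝ (lp E ∞) where
  carrier := {f | Tendsto (fun n => ‖f n‖) atTop (nhds 0)}
  add_mem' := by
    intro f g hf hg
    refine squeeze_zero (fun n => norm_nonneg _) (fun n => ?_) (by simpa using hf.add hg)
    simpa using norm_add_le (f n) (g n)
  zero_mem' := by
    show Tendsto (fun n => ‖(0 : lp E ∞) n‖) atTop (nhds 0)
    simp only [lp.coeFn_zero, Pi.zero_apply, norm_zero]
    exact tendsto_const_nhds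
  smul_mem' := by
    intro c f hf
    refine squeeze_zero (fun n => norm_nonneg _) (fun n => ?_) (by simpa using hf.const_mul ‖c‖)
    simp [norm_smul]

set_option linter.unusedSectionVars false


section aux
variable {E : ℕ → Type*} [∀ n, NormedAddCommGroup (E n)] [∀ n, NormedSpace ℝ (E n)]

lemma coord_le (g : lp E ∞) (n : ℕ) : ‖g n‖ ≤ ‖g‖ :=
  lp.norm_apply_le_norm ENNReal.top_ne_zero g n

lemma normle (g : lp E ∞) {C : ℝ} (hC : 0 ≤ C) (h : ∀ n, ‖g n‖ ≤ C) : ‖g‖ ≤ C :=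
  lp.norm_le_of_forall_le hC h

lemma bjorth_coe {x y : c0Sum E} : BJOrth x y ↔ BJOrth (x : lp E ∞) (y : lp E ∞) :=
  Iff.rfl

noncomputable def mkc0 (f : ∀ n, E n) (N : ℕ) (hf : ∀ n, N ≤ n → f n = 0) : c0Sum E := by
  refine ⟨⟨f, memℓp_infty ?_⟩, ?_⟩
  · have hne : (Finset.range (N + 1)).Nonempty := ⟨0, by simp⟩
    refine ⟨(Finset.range (N + 1)).sup' hne (fun n => ‖f n‖), ?_⟩
    rintro - ⟨n, rfl⟩
    show ‖f n‖ ≤ (Finset.range (N + 1)).sup' hne (fun n => ‖f n‖)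
    rcases le_or_gt n N with h | h
    · exact Finset.le_sup' (fun m => ‖f m‖) (Finset.mem_range.mpr (Nat.lt_succ_of_le h))
    · rw [hf n h.le, norm_zero]
      calc (0:ℝ) = ‖f N‖ := by rw [hf N le_rfl, norm_zero]
        _ ≤ _ := Finset.le_sup' (fun m => ‖f m‖) (Finset.mem_range.mpr N.lt_succ_self)
  · show Tendsto (fun n => ‖f n‖) atTop (nhds 0)
    have he : ∀ᶠ n in atTop, (0:ℝ) = ‖f n‖ :=
      eventually_atTop.2 ⟨N, fun n hn => by rw [hf n hn, norm_zero]⟩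
    exact Tendsto.congr' he tendsto_const_nhds

@[simp] lemma mkc0_apply (f : ∀ n, E n) (N : ℕ) (hf : ∀ n, N ≤ n → f n = 0) (n : ℕ) :
    ((mkc0 f N hf : c0Sum E) : lp E ∞) n = f n := rfl

lemma exists_tail (x : c0Sum E) (hx : x ≠ 0) :
    ∃ N, ∀ n, N ≤ n → ‖(x : lp E ∞) n‖ ≤ ‖(x : lp E ∞)‖ / 2 := by
  have hX0 : (x : lp E ∞) ≠ 0 := by simpa using hx
  have hpos : 0 < ‖(x : lp E ∞)‖ := norm_pos_iff.2 hX0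
  have hT : Tendsto (fun n => ‖(x : lp E ∞) n‖) atTop (nhds 0) := x.2
  have := eventually_atTop.1 (hT.eventually_lt_const (half_pos hpos))
  obtain ⟨N, hN⟩ := this
  exact ⟨N, fun n hn => (hN n hn).le⟩

lemma exists_attain (x : c0Sum E) (hx : x ≠ 0) :
    ∃ k, ‖(x : lp E ∞) k‖ = ‖(x : lp E ∞)‖ := by
  have hX0 : (x : lp E ∞) ≠ 0 := by simpa using hx
  have hpos : 0 < ‖(x : lp E ∞)‖ := norm_pos_iff.2 hX0
  obtain ⟨N, hN⟩ := exists_tail x hx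
  set X := (x : lp E ∞)
  have hne : (Finset.range (N + 1)).Nonempty := ⟨0, by simp⟩
  obtain ⟨k, hkmem, hk⟩ := Finset.exists_mem_eq_sup' hne (fun n => ‖X n‖)
  refine ⟨k, le_antisymm (coord_le X k) ?_⟩
  have hle : ‖X‖ ≤ max ((Finset.range (N + 1)).sup' hne fun n => ‖X n‖) (‖X‖ / 2) := by
    refine normle X (le_max_of_le_right (by linarith)) fun n => ?_
    rcases le_or_gt n N with h | h
    · exact le_max_of_le_left (Finset.le_sup' (fun n => ‖X n‖) (Finset.mem_range.mpr (Nat.lt_succ_of_le h)))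
    · exact le_max_of_le_right (hN n h.le)
  rcases le_max_iff.1 hle with h | h
  · rw [hk] at h; exact h
  · linarith

lemma exists_unit (W : Type*) [NormedAddCommGroup W] [NormedSpace ℝ W] [Nontrivial W] :
    ∃ a : W, ‖a‖ = 1 := by
  obtain ⟨v, hv⟩ := exists_ne (0 : W)
  refine ⟨‖v‖⁻¹ • v, ?_⟩
  rw [norm_smul, norm_inv, norm_norm, inv_mul_cancel₀ (norm_ne_zero_iff.2 hv)]

lemma bj_of_small {W : Type*} [NormedAddCommGroup W] [NormedSpace ℝ W] {u v : W} {δ : ℝ}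
    (hδ : 0 < δ) (h : ∀ c : ℝ, |c| < δ → ‖u‖ ≤ ‖u + c • v‖) : BJOrth u v := by
  intro c
  rcases eq_or_ne c 0 with rfl | hc
  · simp
  · have hcp : 0 < |c| := abs_pos.2 hc
    set t : ℝ := min (δ / (2 * |c|)) 1 with ht
    have ht0 : 0 < t := lt_min (by positivity) one_pos
    have ht1 : t ≤ 1 := min_le_right _ _
    have htc : |t * c| < δ := by
      rw [abs_mul, abs_of_pos ht0]
      calc t * |c| ≤ δ / (2 * |c|) * |c| := by
            exact mul_le_mul_of_nonneg_right (min_le_left _ _) hcp.le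
        _ = δ / 2 := by field_simp
        _ < δ := by linarith
    have key : ‖u + (t * c) • v‖ ≤ (1 - t) * ‖u‖ + t * ‖u + c • v‖ := by
      have : u + (t * c) • v = (1 - t) • u + t • (u + c • v) := by module
      rw [this]
      calc ‖(1 - t) • u + t • (u + c • v)‖ ≤ ‖(1 - t) • u‖ + ‖t • (u + c • v)‖ :=
            norm_add_le _ _
        _ = (1 - t) * ‖u‖ + t * ‖u + c • v‖ := by
            rw [norm_smul, norm_smul, Real.norm_eq_abs, Real.norm_eq_abs,
              abs_of_nonneg (by linarith), abs_of_pos ht0]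
    have := (h (t * c) htc).trans key
    nlinarith
end aux

section aux2
variable {E : ℕ → Type*} [∀ n, NormedAddCommGroup (E n)] [∀ n, NormedSpace ℝ (E n)]

lemma coord_add_smul (Y X : lp E ∞) (c : ℝ) (n : ℕ) : (Y + c • X) n = Y n + c • X n := by
  simp [lp.coeFn_add, lp.coeFn_smul]
  rfl

noncomputable def sg (m : ℕ) (v : E m) : c0Sum E :=
  mkc0 (Pi.single m v) (m + 1) (fun n hn => Pi.single_eq_of_ne (by omega) v)

@[simp] lemma sg_same (m : ℕ) (v : E m) : ((sg m v : c0Sum E) : lp E ∞) m = v := by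
  show Pi.single m v m = v
  simp

lemma sg_ne (m : ℕ) (v : E m) {n : ℕ} (h : n ≠ m) : ((sg m v : c0Sum E) : lp E ∞) n = 0 := by
  show Pi.single m v n = 0
  exact Pi.single_eq_of_ne h v

lemma norm_sg (m : ℕ) (v : E m) : ‖((sg m v : c0Sum E) : lp E ∞)‖ = ‖v‖ := by
  refine le_antisymm (normle _ (norm_nonneg v) fun n => ?_) ?_
  · rcases eq_or_ne n m with rfl | h
    · simp
    · rw [sg_ne m v h]; simp
  · simpa using coord_le ((sg m v : c0Sum E) : lp E ∞) m

lemma dir (W : Type*) [NormedAddCommGroup W] [NormedSpace ℝ W] [Nontrivial W]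
    (u : W) (R : ℝ) (hR : 0 < R) :
    ∃ a : W, ‖a‖ = 1 ∧ ∀ c : ℝ, 0 ≤ c → R ≤ ‖R • a + c • u‖ := by
  rcases eq_or_ne u 0 with rfl | hu
  · obtain ⟨a, ha⟩ := exists_unit W
    exact ⟨a, ha, fun c hc => by simp [norm_smul, ha, abs_of_pos hR]⟩
  · have hn : (0:ℝ) < ‖u‖ := norm_pos_iff.2 hu
    refine ⟨‖u‖⁻¹ • u, ?_, fun c hc => ?_⟩
    · rw [norm_smul, norm_inv, norm_norm, inv_mul_cancel₀ hn.ne']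
    · have h1 : R • (‖u‖⁻¹ • u) + c • u = (R * ‖u‖⁻¹ + c) • u := by
        rw [smul_smul, ← add_smul]
      rw [h1, norm_smul, Real.norm_eq_abs, abs_of_nonneg (by positivity), add_mul]
      have h2 : R * ‖u‖⁻¹ * ‖u‖ = R := by field_simp
      nlinarith [mul_nonneg hc (norm_nonneg u)]
end aux2


section parts
variable {E : ℕ → Type*} [∀ n, NormedAddCommGroup (E n)] [∀ n, NormedSpace ℝ (E n)]
  [∀ n, Nontrivial (E n)]

set_option maxHeartbeats 1000000 in
lemma part1 (x : c0Sum E) (hx : x ≠ 0) : ¬ RightSymPt x := by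
  intro hRS
  set X := (x : lp E ∞) with hXdef
  have hX0 : X ≠ 0 := by simpa [hXdef] using hx
  have hpos : 0 < ‖X‖ := norm_pos_iff.2 hX0
  obtain ⟨N, hN⟩ := exists_tail x hx
  set R : ℝ := ‖X‖ + 1 with hRdef
  have hRpos : 0 < R := by positivity
  obtain ⟨a1, ha1, hkey1⟩ := dir (E N) (X N) R hRpos
  obtain ⟨a2, ha2, hkey2⟩ := dir (E (N + 1)) (-(X (N + 1))) R hRpos
  have claim : ∀ c : ℝ, R ≤ ‖R • a1 + c • X N‖ ∨ R ≤ ‖R • a2 + c • X (N + 1)‖ := by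
    intro c
    rcases le_or_gt 0 c with hc | hc
    · exact Or.inl (hkey1 c hc)
    · right
      have := hkey2 (-c) (by linarith)
      simpa using this
  set g : ∀ n, E n :=
    (fun n => if n < N then X n else 0) + Pi.single N (R • a1) + Pi.single (N + 1) (R • a2)
    with hgdef
  have hglt : ∀ n, n < N → g n = X n := by
    intro n hn
    show (if n < N then X n else 0) + Pi.single N (R • a1) n + Pi.single (N + 1) (R • a2) n = X n
    rw [if_pos hn, Pi.single_eq_of_ne (by omega), Pi.single_eq_of_ne (by omega)]
    simp
  have hgN : g N = R • a1 := by
    show (if N < N then X N else 0) + Pi.single N (R • a1) N + Pi.single (N + 1) (R • a2) N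
      = R • a1
    rw [if_neg (lt_irrefl N), Pi.single_eq_same, Pi.single_eq_of_ne (by omega)]
    simp
  have hgN1 : g (N + 1) = R • a2 := by
    show (if N + 1 < N then X (N + 1) else 0) + Pi.single N (R • a1) (N + 1)
      + Pi.single (N + 1) (R • a2) (N + 1) = R • a2
    rw [if_neg (by omega), Pi.single_eq_same, Pi.single_eq_of_ne (by omega)]
    simp
  have hg : ∀ n, N + 2 ≤ n → g n = 0 := by
    intro n hn
    show (if n < N then X n else 0) + Pi.single N (R • a1) n + Pi.single (N + 1) (R • a2) n = 0
    rw [if_neg (by omega), Pi.single_eq_of_ne (by omega), Pi.single_eq_of_ne (by omega)]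
    simp
  set y : c0Sum E := mkc0 g (N + 2) hg with hydef
  set Y := (y : lp E ∞) with hYdef
  have hYcoord : ∀ n, Y n = g n := fun n => rfl
  have hYle : ‖Y‖ ≤ R := by
    refine normle _ hRpos.le fun n => ?_
    rw [hYcoord]
    have h4 : n < N ∨ n = N ∨ n = N + 1 ∨ N + 2 ≤ n := by omega
    rcases h4 with h | h | h | h
    · rw [hglt n h]
      exact (coord_le X n).trans (by linarith)
    · subst h
      rw [hgN, norm_smul, Real.norm_eq_abs, abs_of_pos hRpos, ha1, mul_one]
    · subst h
      rw [hgN1, norm_smul, Real.norm_eq_abs, abs_of_pos hRpos, ha2, mul_one]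
    · rw [hg n h, norm_zero]; linarith
  have hyx : BJOrth y x := by
    rw [bjorth_coe]
    intro c
    refine hYle.trans ?_
    rcases claim c with h | h
    · calc R ≤ ‖R • a1 + c • X N‖ := h
        _ = ‖(Y + c • X) N‖ := by rw [coord_add_smul, hYcoord, hgN]
        _ ≤ ‖Y + c • X‖ := coord_le _ N
    · calc R ≤ ‖R • a2 + c • X (N + 1)‖ := h
        _ = ‖(Y + c • X) (N + 1)‖ := by rw [coord_add_smul, hYcoord, hgN1]
        _ ≤ ‖Y + c • X‖ := coord_le _ (N + 1)
  have hxy : BJOrth x y := hRS y hyx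
  set ε : ℝ := ‖X‖ / (4 * R) with hεdef
  have hε : 0 < ε := by positivity
  have hεR : ε * R = ‖X‖ / 4 := by
    rw [hεdef]; field_simp
  have hε1 : ε < 1 := by
    rw [hεdef, div_lt_one (by positivity)]
    rw [hRdef]; nlinarith
  have hbound : ‖X + (-ε) • Y‖ ≤ max ((1 - ε) * ‖X‖) (‖X‖ / 2 + ε * R) := by
    refine normle _ (le_max_of_le_right (by positivity)) fun n => ?_
    rw [coord_add_smul, hYcoord]
    have h4 : n < N ∨ n = N ∨ n = N + 1 ∨ N + 2 ≤ n := by omega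
    rcases h4 with h | h | h | h
    · rw [hglt n h]
      have hmod : X n + (-ε) • X n = (1 - ε) • X n := by module
      rw [hmod, norm_smul, Real.norm_eq_abs, abs_of_nonneg (by linarith)]
      exact le_max_of_le_left
        (mul_le_mul_of_nonneg_left (coord_le X n) (by linarith))
    · rw [h, hgN]
      refine le_max_of_le_right ?_
      have h1 : ‖X N + (-ε) • R • a1‖ ≤ ‖X N‖ + ‖(-ε) • R • a1‖ := norm_add_le _ _
      have h2 : ‖(-ε) • R • a1‖ = ε * R := by
        simp [norm_smul, ha1, abs_of_pos hε, abs_of_pos hRpos]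
      have h3 := hN N le_rfl
      rw [h2] at h1
      exact h1.trans (by linarith)
    · rw [h, hgN1]
      refine le_max_of_le_right ?_
      have h1 : ‖X (N + 1) + (-ε) • R • a2‖ ≤ ‖X (N + 1)‖ + ‖(-ε) • R • a2‖ := norm_add_le _ _
      have h2 : ‖(-ε) • R • a2‖ = ε * R := by
        simp [norm_smul, ha2, abs_of_pos hε, abs_of_pos hRpos]
      have h3 := hN (N + 1) (by omega)
      rw [h2] at h1
      exact h1.trans (by linarith)
    · rw [hg n h]
      simp only [smul_zero, add_zero]
      exact le_max_of_le_right (by have := hN n (by omega); linarith)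
  have hfinal := (bjorth_coe.mp hxy (-ε)).trans hbound
  rcases le_max_iff.1 hfinal with h | h
  · nlinarith
  · rw [hεR] at h; linarith
end parts

section part2
variable {E : ℕ → Type*} [∀ n, NormedAddCommGroup (E n)] [∀ n, NormedSpace ℝ (E n)]

set_option maxHeartbeats 1000000 in
lemma part2fwd (x : c0Sum E) (hx : x ≠ 0) (hLS : LeftSymPt x) :
    ∃ n₀, (∀ n, n ≠ n₀ → (x : lp E ∞) n = 0) ∧ LeftSymPt ((x : lp E ∞) n₀) := by
  set X := (x : lp E ∞) with hXdef
  have hX0 : X ≠ 0 := by simpa [hXdef] using hx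
  have hpos : 0 < ‖X‖ := norm_pos_iff.2 hX0
  obtain ⟨k, hk⟩ := exists_attain x hx
  have hkpos : 0 < ‖X k‖ := by rw [hk]; exact hpos
  have hsupp : ∀ m, m ≠ k → X m = 0 := by
    intro m hm
    by_contra hm0
    have hmpos : 0 < ‖X m‖ := norm_pos_iff.2 hm0
    set y : c0Sum E := sg m (X m) with hydef
    set Y := (y : lp E ∞) with hYdef
    have hxy : BJOrth x y := by
      rw [bjorth_coe]
      intro c
      have h1 : (X + c • Y) k = X k := by
        rw [coord_add_smul, sg_ne m (X m) (Ne.symm hm), smul_zero, add_zero]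
      calc ‖X‖ = ‖X k‖ := hk.symm
        _ = ‖(X + c • Y) k‖ := by rw [h1]
        _ ≤ ‖X + c • Y‖ := coord_le _ k
    have hyx := hLS y hxy
    set ε : ℝ := ‖X m‖ / (2 * ‖X‖) with hεdef
    have hε : 0 < ε := by positivity
    have hε1 : ε ≤ 1 / 2 := by
      rw [hεdef, div_le_div_iff₀ (by positivity) (by norm_num)]
      have := coord_le X m
      nlinarith
    have hεX : ε * ‖X‖ = ‖X m‖ / 2 := by rw [hεdef]; field_simp
    have hbound : ‖Y + (-ε) • X‖ ≤ max ((1 - ε) * ‖X m‖) (ε * ‖X‖) := by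
      refine normle _ (le_max_of_le_right (by positivity)) fun n => ?_
      rw [coord_add_smul]
      rcases eq_or_ne n m with rfl | hnm
      · rw [hYdef, hydef, sg_same]
        have hmod : X n + (-ε) • X n = (1 - ε) • X n := by module
        rw [hmod, norm_smul, Real.norm_eq_abs, abs_of_nonneg (by linarith)]
        exact le_max_of_le_left le_rfl
      · rw [hYdef, hydef, sg_ne m (X m) hnm, zero_add, norm_smul, Real.norm_eq_abs,
          abs_neg, abs_of_pos hε]
        exact le_max_of_le_right (mul_le_mul_of_nonneg_left (coord_le X n) hε.le)
    have hfinal := (hyx (-ε)).trans hbound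
    have hnY : ‖Y‖ = ‖X m‖ := by rw [hYdef, hydef, norm_sg]
    have hnY' : ‖y‖ = ‖X m‖ := hnY
    rw [hnY'] at hfinal
    rcases le_max_iff.1 hfinal with h | h
    · nlinarith
    · rw [hεX] at h; linarith
  refine ⟨k, hsupp, ?_⟩
  have hnormx : ‖X‖ = ‖X k‖ := hk.symm
  intro v hv
  set y : c0Sum E := sg k v with hydef
  set Y := (y : lp E ∞) with hYdef
  have hxy : BJOrth x y := by
    rw [bjorth_coe]
    intro c
    have h1 : (X + c • Y) k = X k + c • v := by
      rw [coord_add_smul, hYdef, hydef, sg_same]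
    calc ‖X‖ = ‖X k‖ := hnormx
      _ ≤ ‖X k + c • v‖ := hv c
      _ = ‖(X + c • Y) k‖ := by rw [h1]
      _ ≤ ‖X + c • Y‖ := coord_le _ k
  have hyx := hLS y hxy
  intro c
  have h2 : ‖Y + c • X‖ ≤ ‖v + c • X k‖ := by
    refine normle _ ?_ fun n => ?_
    · calc (0:ℝ) ≤ ‖(Y + c • X) k‖ := norm_nonneg _
        _ = ‖v + c • X k‖ := by rw [coord_add_smul, hYdef, hydef, sg_same]
    · rw [coord_add_smul]
      rcases eq_or_ne n k with rfl | hnk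
      · rw [hYdef, hydef, sg_same]
      · rw [hYdef, hydef, sg_ne k v hnk, hsupp n hnk, smul_zero, add_zero, norm_zero]
        exact norm_nonneg _
  calc ‖v‖ = ‖Y‖ := (norm_sg k v).symm
    _ = ‖y‖ := rfl
    _ ≤ ‖y + c • x‖ := hyx c
    _ = ‖Y + c • X‖ := rfl
    _ ≤ ‖v + c • X k‖ := h2

set_option maxHeartbeats 1000000 in
lemma part2bwd (x : c0Sum E) (hx : x ≠ 0) (n₀ : ℕ)
    (hsupp : ∀ n, n ≠ n₀ → (x : lp E ∞) n = 0)
    (hls : LeftSymPt ((x : lp E ∞) n₀)) : LeftSymPt x := by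
  set X := (x : lp E ∞) with hXdef
  have hX0 : X ≠ 0 := by simpa [hXdef] using hx
  set u := X n₀ with hudef
  have hu0 : u ≠ 0 := by
    intro h
    apply hX0
    refine lp.ext (funext fun n => ?_)
    rcases eq_or_ne n n₀ with rfl | hn
    · exact h
    · exact hsupp n hn
  have hnormx : ‖X‖ = ‖u‖ := by
    refine le_antisymm (normle _ (norm_nonneg u) fun n => ?_) (coord_le X n₀)
    rcases eq_or_ne n n₀ with rfl | hn
    · exact le_rfl
    · rw [hsupp n hn, norm_zero]; exact norm_nonneg u
  intro y hxy
  set Y := (y : lp E ∞) with hYdef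
  have step1 : BJOrth u (Y n₀) := by
    have hδ : (0:ℝ) < ‖u‖ / (‖Y‖ + 1) := div_pos (norm_pos_iff.2 hu0) (by positivity)
    refine bj_of_small hδ fun c hc => ?_
    have hYn : 0 < ‖Y‖ + 1 := by positivity
    have hcY : |c| * ‖Y‖ < ‖u‖ := by
      calc |c| * ‖Y‖ ≤ |c| * (‖Y‖ + 1) := by nlinarith [abs_nonneg c]
        _ < ‖u‖ / (‖Y‖ + 1) * (‖Y‖ + 1) := by
            exact mul_lt_mul_of_pos_right hc hYn
        _ = ‖u‖ := by field_simp
    have hb : ‖X + c • Y‖ ≤ max ‖u + c • Y n₀‖ (|c| * ‖Y‖) := by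
      refine normle _ (le_max_of_le_left (norm_nonneg _)) fun n => ?_
      rw [coord_add_smul]
      rcases eq_or_ne n n₀ with rfl | hn
      · exact le_max_of_le_left le_rfl
      · rw [hsupp n hn, zero_add, norm_smul, Real.norm_eq_abs]
        exact le_max_of_le_right (mul_le_mul_of_nonneg_left (coord_le Y n) (abs_nonneg c))
    have h1 : ‖u‖ ≤ max ‖u + c • Y n₀‖ (|c| * ‖Y‖) := by
      calc ‖u‖ = ‖X‖ := hnormx.symm
        _ = ‖x‖ := rfl
        _ ≤ ‖x + c • y‖ := hxy c
        _ = ‖X + c • Y‖ := rfl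
        _ ≤ _ := hb
    rcases le_max_iff.1 h1 with h | h
    · exact h
    · linarith
  have step2 := hls (Y n₀) step1
  intro c
  show ‖y‖ ≤ ‖y + c • x‖
  have h3 : ∀ n, ‖Y n‖ ≤ ‖Y + c • X‖ := by
    intro n
    rcases eq_or_ne n n₀ with rfl | hn
    · calc ‖Y n‖ ≤ ‖Y n + c • u‖ := step2 c
        _ = ‖(Y + c • X) n‖ := by rw [coord_add_smul]
        _ ≤ ‖Y + c • X‖ := coord_le _ n
    · calc ‖Y n‖ = ‖Y n + c • X n‖ := by rw [hsupp n hn, smul_zero, add_zero]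
        _ = ‖(Y + c • X) n‖ := by rw [coord_add_smul]
        _ ≤ ‖Y + c • X‖ := coord_le _ n
  exact normle _ (norm_nonneg _) h3
end part2

/-- The c₀-direct sum of nontrivial normed spaces has no nonzero right-symmetric point,
and a nonzero `x = (x_n)` is left-symmetric iff `x` is supported on a single coordinate
`n₀` with `x_{n₀}` a left-symmetric point of `E_{n₀}`. -/
theorem stmt19 (E : ℕ → Type*) [∀ n, NormedAddCommGroup (E n)]
    [∀ n, NormedSpace ℝ (E n)] [∀ n, Nontrivial (E n)] :
    (∀ x : c0Sum E, x ≠ 0 → ¬ RightSymPt x) ∧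
    (∀ x : c0Sum E, x ≠ 0 → (LeftSymPt x ↔
      ∃ n₀, (∀ n, n ≠ n₀ → (x : lp E ∞) n = 0) ∧ LeftSymPt ((x : lp E ∞) n₀))) := by
  constructor
  · exact fun x hx => part1 x hx
  · intro x hx
    constructor
    · exact part2fwd x hx
    · rintro ⟨n₀, hsupp, hls⟩
      exact part2bwd x hx n₀ hsupp hls
end
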